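/- The number of labeled rooted forests on [n] = {1,...,n} consisting of exactly k rooted trees (equivalently, labeled planted forests of k trees on n vertices) equals C(n-1, k-1) · n^{n-k}. -/

import Mathlib

open Finset

/-- A rooted forest on `[n]` encoded by its parent function: `f v = none` iff `v` is a root.
Acyclicity is expressed by the existence of a height function decreasing along parent edges. -/
def IsRootedForest {n : ℕ} (f : Fin n → Option (Fin n)) : Prop :=
  ∃ h : Fin n → ℕ, ∀ v w : Fin n, f v = some w → h w < h v

namespace RF
variable {n : ℕ}

def fIter (f : Fin n → Option (Fin n)) : ℕ → Fin n → Option (Fin n)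
  | 0, v => some v
  | m+1, v => match f v with
    | none => none
    | some w => fIter f m w

def Forest' (f : Fin n → Option (Fin n)) : Prop := ∀ v, fIter f n v = none

instance (f : Fin n → Option (Fin n)) : Decidable (Forest' f) := by
  unfold Forest'; infer_instance

lemma fIter_succ_none {f : Fin n → Option (Fin n)} {v} (h : f v = none) (m : ℕ) :
    fIter f (m+1) v = none := by simp [fIter, h]

lemma fIter_succ_some {f : Fin n → Option (Fin n)} {v w} (h : f v = some w) (m : ℕ) :
    fIter f (m+1) v = fIter f m w := by simp [fIter, h]

lemma fIter_none_succ {f : Fin n → Option (Fin n)} :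
    ∀ m v, fIter f m v = none → fIter f (m+1) v = none := by
  intro m
  induction m with
  | zero => intro v h; simp [fIter] at h
  | succ m ih =>
    intro v h
    cases hf : f v with
    | none => exact fIter_succ_none hf _
    | some w =>
      rw [fIter_succ_some hf] at h ⊢
      exact ih w h

lemma fIter_none_mono {f : Fin n → Option (Fin n)} {m m' : ℕ} (hm : m ≤ m') {v}
    (h : fIter f m v = none) : fIter f m' v = none := by
  induction m' with
  | zero => exact (Nat.le_zero.mp hm) ▸ h
  | succ m' ih =>
    rcases Nat.lt_or_ge m (m'+1) with h1 | h1
    · exact fIter_none_succ _ _ (ih (by omega))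
    · have : m = m' + 1 := by omega
      exact this ▸ h

lemma fIter_some_step {f : Fin n → Option (Fin n)} :
    ∀ m v z, fIter f (m+1) v = some z → ∃ y, fIter f m v = some y ∧ f y = some z := by
  intro m
  induction m with
  | zero =>
    intro v z h
    cases hf : f v with
    | none => rw [fIter_succ_none hf] at h; exact absurd h (by simp)
    | some w =>
      rw [fIter_succ_some hf] at h
      simp [fIter] at h
      exact ⟨v, rfl, h ▸ hf⟩
  | succ m ih =>
    intro v z h
    cases hf : f v with
    | none => rw [fIter_succ_none hf] at h; exact absurd h (by simp)
    | some w =>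
      rw [fIter_succ_some hf] at h
      obtain ⟨y, hy1, hy2⟩ := ih w z h
      exact ⟨y, by rw [fIter_succ_some hf]; exact hy1, hy2⟩

lemma forest_iff (f : Fin n → Option (Fin n)) : IsRootedForest f ↔ Forest' f := by
  constructor
  · rintro ⟨h, hdec⟩ v
    by_contra hc
    have hsome : ∀ i ≤ n, ∃ y, fIter f i v = some y := by
      intro i hi
      cases hx : fIter f i v with
      | none => exact absurd (fIter_none_mono hi hx) hc
      | some y => exact ⟨y, rfl⟩
    -- strict decrease of h along the iterates
    have key : ∀ i j : ℕ, i < j → j ≤ n → ∀ y z, fIter f i v = some y →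
        fIter f j v = some z → h z < h y := by
      intro i j hij
      induction j, hij using Nat.le_induction with
      | base =>
        intro hj y z hy hz
        obtain ⟨y', hy', hfy'⟩ := fIter_some_step i v z hz
        rw [hy] at hy'; injection hy' with e; subst e
        exact hdec _ _ hfy'
      | succ j hij ih =>
        intro hj y z hy hz
        obtain ⟨w, hw, hfw⟩ := fIter_some_step j v z hz
        exact (hdec _ _ hfw).trans (ih (by omega) y w hy hw)
    -- build injection Fin (n+1) → Fin n
    have : ∃ g : Fin (n+1) → Fin n, Function.Injective g := by
      choose g hg using fun i : Fin (n+1) => hsome i (Nat.lt_succ_iff.mp i.isLt)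
      refine ⟨g, fun i j hij => ?_⟩
      by_contra hne
      rcases Ne.lt_or_gt hne with hlt | hlt
      · have := key i j hlt (Nat.lt_succ_iff.mp j.isLt) _ _ (hg i) (hg j)
        rw [hij] at this; exact lt_irrefl _ this
      · have := key j i hlt (Nat.lt_succ_iff.mp i.isLt) _ _ (hg j) (hg i)
        rw [hij] at this; exact lt_irrefl _ this
    obtain ⟨g, hg⟩ := this
    have := Fintype.card_le_of_injective g hg
    simp at this
  · intro hf
    have hex : ∀ v : Fin n, ∃ m, fIter f m v = none := fun v => ⟨n, hf v⟩
    refine ⟨fun v => Nat.find (hex v), fun v w hvw => ?_⟩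
    have hspec : fIter f (Nat.find (hex v)) v = none := Nat.find_spec (hex v)
    have hpos : Nat.find (hex v) ≠ 0 := by
      intro h0; rw [h0] at hspec; simp [fIter] at hspec
    obtain ⟨m, hm⟩ : ∃ m, Nat.find (hex v) = m + 1 := ⟨_, (Nat.succ_pred_eq_of_ne_zero hpos).symm⟩
    rw [hm, fIter_succ_some hvw] at hspec
    have : Nat.find (hex w) ≤ m := Nat.find_le hspec
    show Nat.find (hex w) < Nat.find (hex v)
    omega

end RF
namespace RF
variable {n : ℕ}

def rootAux (f : Fin n → Option (Fin n)) : ℕ → Fin n → Fin n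
  | 0, v => v
  | m+1, v => match f v with
    | none => v
    | some w => rootAux f m w

def root (f : Fin n → Option (Fin n)) (v : Fin n) : Fin n := rootAux f n v

def depth (f : Fin n → Option (Fin n)) : ℕ → Fin n → ℕ
  | 0, _ => 0
  | m+1, v => match f v with
    | none => 0
    | some w => depth f m w + 1

def dep (f : Fin n → Option (Fin n)) (v : Fin n) : ℕ := depth f n v

lemma rootAux_none {f : Fin n → Option (Fin n)} {v} (h : f v = none) :
    ∀ m, rootAux f m v = v
  | 0 => rfl
  | m+1 => by simp [rootAux, h]

lemma rootAux_some {f : Fin n → Option (Fin n)} {v w} (h : f v = some w) (m : ℕ) :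
    rootAux f (m+1) v = rootAux f m w := by simp [rootAux, h]

lemma depth_none {f : Fin n → Option (Fin n)} {v} (h : f v = none) :
    ∀ m, depth f m v = 0
  | 0 => rfl
  | m+1 => by simp [depth, h]

lemma depth_some {f : Fin n → Option (Fin n)} {v w} (h : f v = some w) (m : ℕ) :
    depth f (m+1) v = depth f m w + 1 := by simp [depth, h]

lemma rootAux_stable {f : Fin n → Option (Fin n)} :
    ∀ m v, fIter f m v = none → rootAux f (m+1) v = rootAux f m v := by
  intro m
  induction m with
  | zero => intro v h; simp [fIter] at h
  | succ m ih =>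
    intro v h
    cases hf : f v with
    | none => rw [rootAux_none hf, rootAux_none hf]
    | some w =>
      rw [rootAux_some hf, rootAux_some hf]
      exact ih w (by rwa [fIter_succ_some hf] at h)

lemma depth_stable {f : Fin n → Option (Fin n)} :
    ∀ m v, fIter f m v = none → depth f (m+1) v = depth f m v := by
  intro m
  induction m with
  | zero => intro v h; simp [fIter] at h
  | succ m ih =>
    intro v h
    cases hf : f v with
    | none => rw [depth_none hf, depth_none hf]
    | some w =>
      rw [depth_some hf, depth_some hf]
      rw [ih w (by rwa [fIter_succ_some hf] at h)]

lemma f_rootAux_none {f : Fin n → Option (Fin n)} :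
    ∀ m v, fIter f m v = none → f (rootAux f m v) = none := by
  intro m
  induction m with
  | zero => intro v h; simp [fIter] at h
  | succ m ih =>
    intro v h
    cases hf : f v with
    | none => rwa [rootAux_none hf]
    | some w =>
      rw [rootAux_some hf]
      exact ih w (by rwa [fIter_succ_some hf] at h)

lemma fIter_pred {f : Fin n → Option (Fin n)} {v w : Fin n} {m : ℕ} (h : f v = some w)
    (hm : fIter f m v = none) (hm1 : 1 ≤ m) : fIter f (m-1) w = none := by
  obtain ⟨m', rfl⟩ : ∃ m', m = m' + 1 := ⟨m - 1, by omega⟩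
  rw [fIter_succ_some h] at hm
  simpa using hm

lemma rootAux_step_ge {f : Fin n → Option (Fin n)} {v w : Fin n} {m : ℕ} (hm1 : 1 ≤ m)
    (h : f v = some w) (hw : fIter f (m-1) w = none) : rootAux f m v = rootAux f m w := by
  obtain ⟨m', rfl⟩ : ∃ m', m = m' + 1 := ⟨m - 1, by omega⟩
  simp only [Nat.add_sub_cancel] at hw
  rw [rootAux_some h, rootAux_stable m' w hw]

lemma depth_step_ge {f : Fin n → Option (Fin n)} {v w : Fin n} {m : ℕ} (hm1 : 1 ≤ m)
    (h : f v = some w) (hw : fIter f (m-1) w = none) : depth f m v = depth f m w + 1 := by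
  obtain ⟨m', rfl⟩ : ∃ m', m = m' + 1 := ⟨m - 1, by omega⟩
  simp only [Nat.add_sub_cancel] at hw
  rw [depth_some h, depth_stable m' w hw]

section ForestProps
variable {f : Fin n → Option (Fin n)} (hf : Forest' f)

lemma root_eq_self {v : Fin n} (h : f v = none) : root f v = v := rootAux_none h n

include hf in
lemma root_step {v w : Fin n} (h : f v = some w) : root f v = root f w :=
  rootAux_step_ge v.pos h (fIter_pred h (hf v) v.pos)

include hf in
lemma f_root_none (v : Fin n) : f (root f v) = none := f_rootAux_none n v (hf v)

include hf in
lemma dep_step {v w : Fin n} (h : f v = some w) : dep f v = dep f w + 1 :=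
  depth_step_ge v.pos h (fIter_pred h (hf v) v.pos)

lemma dep_root_zero {v : Fin n} (h : f v = none) : dep f v = 0 := depth_none h n

include hf in
lemma root_mem_roots (v : Fin n) : f (root f v) = none := f_root_none hf v

-- height ≤ along path to root, for any function H decreasing on f-edges
include hf in
lemma height_root_le (H : Fin n → ℕ) (hH : ∀ x y, f x = some y → H y < H x) (v : Fin n) :
    H (root f v) ≤ H v := by
  suffices h : ∀ m x, fIter f m x = none → H (rootAux f m x) ≤ H x by
    exact h n v (hf v)
  intro m
  induction m with
  | zero => intro x h; simp [fIter] at h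
  | succ m ih =>
    intro x h
    cases hx : f x with
    | none => rw [rootAux_none hx]
    | some w =>
      rw [rootAux_some hx]
      exact le_of_lt <| lt_of_le_of_lt (ih w (by rwa [fIter_succ_some hx] at h)) (hH _ _ hx)

end ForestProps
end RF
namespace RF
variable {n : ℕ}

open Function in
lemma forest_add_edge {f : Fin n → Option (Fin n)} (hf : Forest' f) {u v : Fin n}
    (hu : f u = none) (hv : root f v ≠ u) : Forest' (Function.update f u (some v)) := by
  rw [← forest_iff]
  refine ⟨fun x => if root f x = u then dep f x + dep f v + 1 else dep f x, ?_⟩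
  intro x y hxy
  by_cases hxu : x = u
  · subst hxu
    rw [Function.update_self] at hxy
    injection hxy with e; subst e
    simp only []
    rw [root_eq_self hu, if_pos rfl, dep_root_zero hu, if_neg hv]
    omega
  · rw [Function.update_of_ne hxu] at hxy
    have hroot : root f x = root f y := root_step hf hxy
    have hdep : dep f x = dep f y + 1 := dep_step hf hxy
    simp only []
    rw [hroot]
    by_cases hr : root f y = u <;> simp [hr, hdep]

open Function in
lemma forest_remove_edge {g : Fin n → Option (Fin n)} (hg : Forest' g) (u : Fin n) :
    Forest' (Function.update g u none) := by
  rw [← forest_iff]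
  refine ⟨dep g, ?_⟩
  intro x y hxy
  by_cases hxu : x = u
  · subst hxu; rw [Function.update_self] at hxy; exact absurd hxy (by simp)
  · rw [Function.update_of_ne hxu] at hxy
    rw [dep_step hg hxy]; omega

open Function in
lemma root_ne_of_edge {g : Fin n → Option (Fin n)} (hg : Forest' g) {u v : Fin n}
    (huv : g u = some v) : root (Function.update g u none) v ≠ u := by
  set f := Function.update g u none with hfdef
  have hf : Forest' f := forest_remove_edge hg u
  have hdec : ∀ x y, f x = some y → dep g y < dep g x := by
    intro x y hxy
    by_cases hxu : x = u
    · subst hxu; rw [hfdef, Function.update_self] at hxy; exact absurd hxy (by simp)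
    · rw [hfdef, Function.update_of_ne hxu] at hxy
      rw [dep_step hg hxy]; omega
  intro hcontra
  have h1 : dep g (root f v) ≤ dep g v := height_root_le hf (dep g) hdec v
  rw [hcontra] at h1
  rw [dep_step hg huv] at h1
  omega
end RF
namespace RF
variable {n : ℕ}

def Fk (n k : ℕ) : Finset (Fin n → Option (Fin n)) :=
  univ.filter fun f => Forest' f ∧ (univ.filter fun v => f v = none).card = k

lemma mem_Fk {k : ℕ} {f : Fin n → Option (Fin n)} :
    f ∈ Fk n k ↔ Forest' f ∧ (univ.filter fun v => f v = none).card = k := by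
  simp [Fk]

lemma Fk_base : (Fk n n).card = 1 := by
  have : Fk n n = {fun _ => none} := by
    ext f
    rw [mem_Fk, Finset.mem_singleton]
    constructor
    · rintro ⟨-, hcard⟩
      have : (univ.filter fun v => f v = none) = univ := by
        apply Finset.eq_univ_of_card
        rw [hcard, Fintype.card_fin]
      funext v
      have := Finset.mem_filter.mp (this ▸ Finset.mem_univ v)
      exact this.2
    · rintro rfl
      refine ⟨fun v => ?_, by simp⟩
      exact fIter_none_mono v.pos (fIter_succ_none rfl 0)
  rw [this, Finset.card_singleton]

/-- number of non-roots -/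
lemma card_nonroots {k : ℕ} {f : Fin n → Option (Fin n)}
    (h : (univ.filter fun v => f v = none).card = k) :
    (univ.filter fun v => f v ≠ none).card = n - k := by
  have := Finset.card_filter_add_card_filter_not (s := (univ : Finset (Fin n)))
    (p := fun v => f v = none)
  rw [h, Finset.card_univ, Fintype.card_fin] at this
  simp only [ne_eq]
  omega

lemma roots_update_some {f : Fin n → Option (Fin n)} {u v : Fin n} (hu : f u = none) :
    (univ.filter fun x => Function.update f u (some v) x = none)
      = (univ.filter fun x => f x = none).erase u := by
  ext x
  by_cases hx : x = u
  · subst hx; simp [Function.update_self]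
  · simp [Function.update_of_ne hx, hx]

lemma roots_update_none {g : Fin n → Option (Fin n)} (u : Fin n) :
    (univ.filter fun x => Function.update g u none x = none)
      = insert u (univ.filter fun x => g x = none) := by
  ext x
  by_cases hx : x = u
  · subst hx; simp [Function.update_self]
  · simp [Function.update_of_ne hx, hx]

lemma recurrence (n k : ℕ) : (n - k) * (Fk n k).card = k * n * (Fk n (k+1)).card := by
  classical
  set B : Finset ((Fin n → Option (Fin n)) × Fin n) :=
    univ.filter fun p => p.1 ∈ Fk n k ∧ p.1 p.2 ≠ none with hB
  set A : Finset ((Fin n → Option (Fin n)) × Fin n × Fin n) :=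
    univ.filter fun p => p.1 ∈ Fk n (k+1) ∧ p.1 p.2.1 = none ∧ root p.1 p.2.2 ≠ p.2.1 with hA
  -- Step 1 : A.card = B.card
  have hAB : A.card = B.card := by
    refine Finset.card_nbij'
      (i := fun p : (Fin n → Option (Fin n)) × Fin n × Fin n =>
        (Function.update p.1 p.2.1 (some p.2.2), p.2.1))
      (j := fun q : (Fin n → Option (Fin n)) × Fin n =>
        (Function.update q.1 q.2 none, q.2, (q.1 q.2).getD q.2)) ?_ ?_ ?_ ?_
    · rintro ⟨f, u, v⟩ hp
      rw [hA, Finset.mem_coe, Finset.mem_filter] at hp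
      obtain ⟨-, hf, hu, hv⟩ := hp
      rw [mem_Fk] at hf
      dsimp only at hf hu hv
      rw [hB, Finset.mem_coe, Finset.mem_filter, mem_Fk]
      refine ⟨Finset.mem_univ _, ⟨forest_add_edge hf.1 hu hv, ?_⟩, by simp⟩
      rw [roots_update_some hu, Finset.card_erase_of_mem (by simp [hu]), hf.2]
      omega
    · rintro ⟨g, u⟩ hq
      rw [hB, Finset.mem_coe, Finset.mem_filter] at hq
      obtain ⟨-, hg, hu⟩ := hq
      rw [mem_Fk] at hg
      dsimp only at hg hu
      obtain ⟨v, hv⟩ := Option.ne_none_iff_exists'.mp hu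
      rw [hA, Finset.mem_coe, Finset.mem_filter, mem_Fk]
      refine ⟨Finset.mem_univ _, ⟨forest_remove_edge hg.1 u, ?_⟩, by simp, ?_⟩
      · rw [roots_update_none, Finset.card_insert_of_notMem (by simp [hu]), hg.2]
      · simp only [hv, Option.getD_some]
        exact root_ne_of_edge hg.1 hv
    · rintro ⟨f, u, v⟩ hp
      rw [hA, Finset.mem_coe, Finset.mem_filter] at hp
      obtain ⟨-, hf, hu, hv⟩ := hp
      dsimp only at hu hv ⊢
      simp only [Function.update_self, Option.getD_some, Function.update_idem]
      rw [← hu, Function.update_eq_self]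
    · rintro ⟨g, u⟩ hq
      rw [hB, Finset.mem_coe, Finset.mem_filter] at hq
      obtain ⟨-, hg, hu⟩ := hq
      dsimp only at hu ⊢
      obtain ⟨v, hv⟩ := Option.ne_none_iff_exists'.mp hu
      simp only [Function.update_self, Function.update_idem, hv, Option.getD_some]
      rw [← hv, Function.update_eq_self]
  -- Step 2 : B.card = (n - k) * (Fk n k).card
  have hBcard : B.card = (n - k) * (Fk n k).card := by
    rw [Finset.card_eq_sum_card_fiberwise (f := Prod.fst) (t := Fk n k)
      (fun p hp => by rw [hB, Finset.mem_coe, Finset.mem_filter] at hp; exact hp.2.1)]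
    rw [Finset.sum_congr rfl (fun f hf => ?_), Finset.sum_const, smul_eq_mul, mul_comm]
    have : (B.filter fun p => p.1 = f) = {f} ×ˢ (univ.filter fun u => f u ≠ none) := by
      ext ⟨g, u⟩
      simp only [hB, Finset.mem_filter, Finset.mem_product, Finset.mem_singleton,
        Finset.mem_univ, true_and]
      constructor
      · rintro ⟨⟨-, h2⟩, rfl⟩; exact ⟨rfl, h2⟩
      · rintro ⟨rfl, h2⟩; exact ⟨⟨hf, h2⟩, rfl⟩
    rw [this, Finset.card_product, Finset.card_singleton, one_mul,
      card_nonroots (mem_Fk.mp hf).2]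
  -- Step 3 : A.card = k * n * (Fk n (k+1)).card
  have hAcard : A.card = k * n * (Fk n (k+1)).card := by
    rw [Finset.card_eq_sum_card_fiberwise (f := Prod.fst) (t := Fk n (k+1))
      (fun p hp => by rw [hA, Finset.mem_coe, Finset.mem_filter] at hp; exact hp.2.1)]
    rw [Finset.sum_congr rfl (fun f hf => ?_), Finset.sum_const, smul_eq_mul, mul_comm]
    obtain ⟨hforest, hcard⟩ := mem_Fk.mp hf
    have hfiber : (A.filter fun p => p.1 = f)
        = {f} ×ˢ (univ.filter fun q : Fin n × Fin n => f q.1 = none ∧ root f q.2 ≠ q.1) := by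
      ext ⟨g, u, v⟩
      simp only [hA, Finset.mem_filter, Finset.mem_product, Finset.mem_singleton,
        Finset.mem_univ, true_and]
      constructor
      · rintro ⟨⟨-, h2, h3⟩, rfl⟩; exact ⟨rfl, h2, h3⟩
      · rintro ⟨rfl, h2, h3⟩; exact ⟨⟨hf, h2, h3⟩, rfl⟩
    rw [hfiber, Finset.card_product, Finset.card_singleton, one_mul]
    -- count the pairs (u, v)
    set R := (univ.filter fun x => f x = none) with hR
    have hcount : (univ.filter fun q : Fin n × Fin n => f q.1 = none ∧ root f q.2 ≠ q.1).card
        = k * n := by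
      rw [Finset.card_eq_sum_card_fiberwise (f := Prod.fst) (t := R)
        (fun q hq => by
          rw [Finset.mem_coe, Finset.mem_filter] at hq
          simp [hR, hq.2.1])]
      have hfib2 : ∀ u ∈ R, ((univ.filter fun q : Fin n × Fin n =>
          f q.1 = none ∧ root f q.2 ≠ q.1).filter fun q => q.1 = u)
            = {u} ×ˢ (univ.filter fun v => root f v ≠ u) := by
        intro u hu
        rw [hR, Finset.mem_filter] at hu
        ext ⟨x, v⟩
        simp only [Finset.mem_filter, Finset.mem_product, Finset.mem_singleton,
          Finset.mem_univ, true_and]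
        constructor
        · rintro ⟨⟨-, h3⟩, rfl⟩; exact ⟨rfl, h3⟩
        · rintro ⟨rfl, h3⟩; exact ⟨⟨hu.2, h3⟩, rfl⟩
      rw [Finset.sum_congr rfl (fun u hu => by
        rw [hfib2 u hu, Finset.card_product, Finset.card_singleton, one_mul])]
      -- now ∑ u in R, card (filter (root f · ≠ u)) = k * n
      have hsplit : ∀ u : Fin n, (univ.filter fun v => root f v ≠ u).card
          = n - (univ.filter fun v => root f v = u).card := by
        intro u
        have := Finset.card_filter_add_card_filter_not (s := (univ : Finset (Fin n)))
          (p := fun v => root f v = u)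
        rw [Finset.card_univ, Fintype.card_fin] at this
        simp only [ne_eq]
        omega
      have hparts : ∑ u ∈ R, (univ.filter fun v => root f v = u).card = n := by
        rw [← Finset.card_eq_sum_card_fiberwise (f := root f) (t := R)
          (fun v _ => by simp [hR, f_root_none hforest v]),
          Finset.card_univ, Fintype.card_fin]
      have hle : ∀ u : Fin n, (univ.filter fun v => root f v = u).card ≤ n := by
        intro u
        calc (univ.filter fun v => root f v = u).card ≤ (univ : Finset (Fin n)).card :=
              Finset.card_filter_le _ _
          _ = n := by rw [Finset.card_univ, Fintype.card_fin]
      have hRcard : R.card = k + 1 := hcard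
      calc ∑ u ∈ R, (univ.filter fun v => root f v ≠ u).card
          = ∑ u ∈ R, (n - (univ.filter fun v => root f v = u).card) := by
            exact Finset.sum_congr rfl fun u _ => hsplit u
        _ = k * n := by
            have h1 : ∑ u ∈ R, (n - (univ.filter fun v => root f v = u).card)
                + ∑ u ∈ R, (univ.filter fun v => root f v = u).card = ∑ u ∈ R, n := by
              rw [← Finset.sum_add_distrib]
              exact Finset.sum_congr rfl fun u _ => by
                have := hle u; omega
            rw [hparts, Finset.sum_const, smul_eq_mul, hRcard] at h1
            have h2 : (k+1)*n = k*n + n := by ring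
            omega
    rw [hcount]
  rw [← hBcard, ← hAB, hAcard]

end RF
namespace RF

lemma Fk_card (n : ℕ) : ∀ j k : ℕ, 1 ≤ k → k ≤ n → n - k = j →
    (Fk n k).card = Nat.choose (n - 1) (k - 1) * n ^ (n - k) := by
  intro j
  induction j with
  | zero =>
    intro k hk1 hkn hj
    have : k = n := by omega
    subst this
    rw [Fk_base, Nat.sub_self, pow_zero, Nat.choose_self, mul_one]
  | succ j ih =>
    intro k hk1 hkn hj
    have hkn' : k < n := by omega
    have hrec := recurrence n k
    have hih : (Fk n (k+1)).card = Nat.choose (n - 1) k * n ^ (n - (k+1)) := by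
      have := ih (k+1) (by omega) (by omega) (by omega)
      simpa using this
    rw [hih] at hrec
    -- identity : k * (n-1).choose k = (n - k) * (n-1).choose (k-1)
    have hid : (n - 1).choose k * k = (n - 1).choose (k - 1) * (n - k) := by
      have h := Nat.choose_succ_right_eq (n - 1) (k - 1)
      have hk : k - 1 + 1 = k := by omega
      rw [hk] at h
      have h2 : n - 1 - (k - 1) = n - k := by omega
      rw [h2] at h
      exact h
    have hpow : n ^ (n - k) = n * n ^ (n - (k+1)) := by
      have : n - k = (n - (k+1)) + 1 := by omega
      rw [this, pow_succ]
      ring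
    have key : (n - k) * (Fk n k).card
        = (n - k) * (Nat.choose (n - 1) (k - 1) * n ^ (n - k)) := by
      rw [hrec, hpow]
      calc k * n * (Nat.choose (n-1) k * n ^ (n - (k+1)))
          = ((n-1).choose k * k) * (n * n ^ (n - (k+1))) := by ring
        _ = ((n-1).choose (k-1) * (n - k)) * (n * n ^ (n - (k+1))) := by rw [hid]
        _ = (n - k) * (Nat.choose (n-1) (k-1) * (n * n ^ (n - (k+1)))) := by ring
    exact Nat.eq_of_mul_eq_mul_left (by omega) key
end RF


theorem count_rooted_forests (n k : ℕ) (hk : 1 ≤ k) (hkn : k ≤ n) :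
    Nat.card {f : Fin n → Option (Fin n) //
        IsRootedForest f ∧
          (Finset.univ.filter (fun v => f v = none)).card = k} =
      Nat.choose (n - 1) (k - 1) * n ^ (n - k) := by
  classical
  have e : {f : Fin n → Option (Fin n) //
        IsRootedForest f ∧ (Finset.univ.filter (fun v => f v = none)).card = k}
      ≃ {f : Fin n → Option (Fin n) //
        RF.Forest' f ∧ (Finset.univ.filter (fun v => f v = none)).card = k} :=
    Equiv.subtypeEquivRight (fun f => by rw [RF.forest_iff])
  rw [Nat.card_congr e, Nat.card_eq_fintype_card, Fintype.card_subtype]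
  exact RF.Fk_card n (n - k) k hk hkn rfl
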